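/- The stationarity condition of the Newton iteration: θ* is a fixed point of the map θ ↦ K(Wθ + ∇_θ log π(y|θ)) − K W^{1/2}(I+W^{1/2}KW^{1/2})^{-1}W^{1/2}K(Wθ + ∇_θ log π(y|θ)) (with W = −∇²_θ log π(y|θ)) if and only if K^{-1}θ* = ∇_θ log π(y|θ*), i.e., θ* is a stationary point of the unnormalized log posterior. -/

import Mathlib

open Matrix

namespace Matrix.PosSemidef

open scoped ComplexOrder

/-- The square root of a positive semidefinite matrix, as `Matrix.PosSemidef.sqrt` was defined
in the older Mathlib (removed since). -/
noncomputable def sqrt {𝕜 : Type*} [RCLike 𝕜] {n : Type*} [Fintype n] [DecidableEq n]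
    {A : Matrix n n 𝕜} (hA : A.PosSemidef) : Matrix n n 𝕜 :=
  hA.1.eigenvectorUnitary.1 * diagonal ((↑) ∘ (fun x : ℝ => Real.sqrt x) ∘ hA.1.eigenvalues) *
    (star hA.1.eigenvectorUnitary : Matrix n n 𝕜)

end Matrix.PosSemidef

lemma sqrt_mul_self' {m : ℕ} {A : Matrix (Fin m) (Fin m) ℝ} (hA : A.PosSemidef) :
    hA.sqrt * hA.sqrt = A := by
  have hU : (star hA.1.eigenvectorUnitary : Matrix (Fin m) (Fin m) ℝ) *
      hA.1.eigenvectorUnitary.1 = 1 := Unitary.star_mul_self_of_mem hA.1.eigenvectorUnitary.2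
  unfold Matrix.PosSemidef.sqrt
  conv_rhs => rw [hA.1.spectral_theorem, Unitary.conjStarAlgAut_apply]
  have e : ∀ (U D sU : Matrix (Fin m) (Fin m) ℝ), U * D * sU * (U * D * sU) =
      U * (D * (sU * U) * D) * sU := by intros; simp only [mul_assoc]
  rw [e, hU, mul_one, diagonal_mul_diagonal]
  congr 2
  funext i j
  simp [diagonal_apply, Real.mul_self_sqrt (hA.eigenvalues_nonneg i)]

lemma sqrt_conjTranspose' {m : ℕ} {A : Matrix (Fin m) (Fin m) ℝ} (hA : A.PosSemidef) :
    hA.sqrtᴴ = hA.sqrt := by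
  unfold Matrix.PosSemidef.sqrt
  simp [conjTranspose_mul, mul_assoc, Matrix.star_eq_conjTranspose,
    Matrix.conjTranspose_eq_transpose_of_trivial]

/-- Stationarity of the Newton iteration: `θ*` is a fixed point of the Newton map
`θ ↦ K(Wθ + g(θ)) − K W^{1/2}(I + W^{1/2} K W^{1/2})⁻¹ W^{1/2} K (Wθ + g(θ))`
(with `W = −∇²_θ log π(y|θ*)` and `g = ∇_θ log π(y|·)`) if and only if
`K⁻¹ θ* = g(θ*)`, i.e. `θ*` is a stationary point of the unnormalized log posterior. -/
theorem newton_fixed_point_iff_stationary (n : ℕ)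
    (K W : Matrix (Fin n) (Fin n) ℝ) (hK : K.PosDef) (hW : W.PosSemidef)
    (g : (Fin n → ℝ) → (Fin n → ℝ)) (θstar : Fin n → ℝ)
    (b : Fin n → ℝ) (hb : b = W.mulVec θstar + g θstar) :
    K.mulVec b -
        (K * hW.sqrt * (1 + hW.sqrt * K * hW.sqrt)⁻¹ * hW.sqrt * K).mulVec b =
        θstar ↔
      K⁻¹.mulVec θstar = g θstar := by
  set S := hW.sqrt with hS
  have hSS : S * S = W := sqrt_mul_self' hW
  have hSh : Sᴴ = S := sqrt_conjTranspose' hW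
  have hSKS : (S * K * S).PosSemidef := by
    have := hK.posSemidef.mul_mul_conjTranspose_same S
    rwa [hSh] at this
  have hA : (1 + S * K * S).PosDef := Matrix.PosDef.add_posSemidef Matrix.PosDef.one hSKS
  set A := 1 + S * K * S with hAdef
  have hAinv : A * A⁻¹ = 1 := mul_nonsing_inv _ hA.det_pos.ne'.isUnit
  have hAinv' : A⁻¹ * A = 1 := nonsing_inv_mul _ hA.det_pos.ne'.isUnit
  have hKinv : K * K⁻¹ = 1 := mul_nonsing_inv _ hK.det_pos.ne'.isUnit
  have hKinv' : K⁻¹ * K = 1 := nonsing_inv_mul _ hK.det_pos.ne'.isUnit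
  set M := K - K * S * A⁻¹ * S * K with hM
  set N := K⁻¹ + W with hN
  have key : M * N = 1 := by
    have h1 : K * S * A⁻¹ * S + K * S * A⁻¹ * S * K * W = K * W := by
      calc K * S * A⁻¹ * S + K * S * A⁻¹ * S * K * W
          = K * S * A⁻¹ * (A * S) := by rw [← hSS, hAdef]; noncomm_ring
        _ = K * S * S := by rw [← mul_assoc, mul_assoc (K*S) A⁻¹ A, hAinv', mul_one]
        _ = K * W := by rw [mul_assoc, hSS]
    calc M * N = K * K⁻¹ + K * W - (K * S * A⁻¹ * S * (K * K⁻¹) + K * S * A⁻¹ * S * K * W) := by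
          rw [hM, hN]; noncomm_ring
      _ = 1 := by rw [hKinv, mul_one, h1]; noncomm_ring
  have key' : N * M = 1 := by
    have h1 : S * A⁻¹ * S * K + W * K * S * A⁻¹ * S * K = W * K := by
      calc S * A⁻¹ * S * K + W * K * S * A⁻¹ * S * K
          = (S * A) * A⁻¹ * (S * K) := by rw [← hSS, hAdef]; noncomm_ring
        _ = S * (A * A⁻¹) * (S * K) := by noncomm_ring
        _ = W * K := by rw [hAinv, mul_one, ← mul_assoc, hSS]
    calc N * M
        = K⁻¹ * K + W * K - (K⁻¹ * K * (S * A⁻¹ * S * K) + W * K * S * A⁻¹ * S * K) := by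
          rw [hM, hN]; noncomm_ring
      _ = 1 := by rw [hKinv', one_mul, h1]; noncomm_ring
  have hMv : K.mulVec b - (K * S * A⁻¹ * S * K).mulVec b = M.mulVec b := by
    rw [hM, sub_mulVec]
  rw [hMv]
  constructor
  · intro h
    have : N.mulVec (M.mulVec b) = N.mulVec θstar := by rw [h]
    rw [mulVec_mulVec, key', one_mulVec] at this
    rw [hb, hN, add_mulVec] at this
    have h2 : g θstar = K⁻¹.mulVec θstar := by
      have := this
      rw [add_comm (K⁻¹.mulVec θstar)] at this
      exact add_left_cancel this
    exact h2.symm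
  · intro h
    have hbN : b = N.mulVec θstar := by
      rw [hb, hN, add_mulVec, h, add_comm]
    rw [hbN, mulVec_mulVec, key, one_mulVec]
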